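/- Let μ⁺, μ⁻ be given by a 2-additive decomposition, and let μ̂(C,D) = μ⁺(C,D) − μ⁻(C,D). Assume that a_j⁺ + Σ_{k∈C} a_{jk}⁺ + Σ_{k∈D} a⁺_{j|k} ≥ 0 for all j ∈ J and all (C∪{j},D) ∈ P(J) with j ∉ C, and that a_j⁻ + Σ_{k∈D} a_{jk}⁻ + Σ_{k∈C} a⁻_{k|j} ≥ 0 for all j ∈ J and all (C,D∪{j}) ∈ P(J) with j ∉ D. Then μ̂ is monotone on P(J): for all (C,D),(E,F) ∈ P(J) with C ⊇ E and D ⊆ F, μ̂(C,D) ≥ μ̂(E,F). -/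

import Mathlib

/-- Sum of a symmetric coefficient family over the unordered pairs `{j,k} ⊆ C`, `j ≠ k`. -/
noncomputable def pairSum {n : ℕ} (a : Fin n → Fin n → ℝ) (C : Finset (Fin n)) : ℝ :=
  (∑ p ∈ C.offDiag, a p.1 p.2) / 2

/-- `μ⁺(C,D) = Σ_{j∈C} a_j⁺ + Σ_{{j,k}⊆C} a_{jk}⁺ + Σ_{j∈C,k∈D} a⁺_{j|k}`. -/
noncomputable def muPlus {n : ℕ} (ap : Fin n → ℝ) (aps apo : Fin n → Fin n → ℝ)
    (C D : Finset (Fin n)) : ℝ :=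
  ∑ j ∈ C, ap j + pairSum aps C + ∑ j ∈ C, ∑ k ∈ D, apo j k

/-- `μ⁻(C,D) = Σ_{j∈D} a_j⁻ + Σ_{{j,k}⊆D} a_{jk}⁻ + Σ_{j∈C,k∈D} a⁻_{j|k}`. -/
noncomputable def muMinus {n : ℕ} (am : Fin n → ℝ) (ams amo : Fin n → Fin n → ℝ)
    (C D : Finset (Fin n)) : ℝ :=
  ∑ j ∈ D, am j + pairSum ams D + ∑ j ∈ C, ∑ k ∈ D, amo j k

lemma pairSum_insert {n : ℕ} (a : Fin n → Fin n → ℝ) (hsym : ∀ j k, a j k = a k j)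
    (j : Fin n) (C : Finset (Fin n)) (hj : j ∉ C) :
    pairSum a (insert j C) = pairSum a C + ∑ k ∈ C, a j k := by
  unfold pairSum
  rw [Finset.offDiag_insert hj]
  have d1 : Disjoint (C.offDiag ∪ {j} ×ˢ C) (C ×ˢ {j}) := by
    simp only [Finset.disjoint_left, Finset.mem_union, Finset.mem_offDiag,
      Finset.mem_product, Finset.mem_singleton]
    rintro ⟨x, y⟩ h ⟨hx, hy⟩
    subst hy
    rcases h with ⟨-, hj', -⟩ | ⟨-, hj'⟩ <;> exact hj hj'
  have d2 : Disjoint C.offDiag ({j} ×ˢ C) := by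
    simp only [Finset.disjoint_left, Finset.mem_offDiag, Finset.mem_product,
      Finset.mem_singleton]
    rintro ⟨x, y⟩ ⟨hx, -, -⟩ ⟨hx', -⟩
    exact hj (hx' ▸ hx)
  rw [Finset.sum_union d1, Finset.sum_union d2]
  simp only [Finset.singleton_product, Finset.product_singleton, Finset.sum_map,
    Function.Embedding.coeFn_mk]
  have h3 : ∑ k ∈ C, a k j = ∑ k ∈ C, a j k := Finset.sum_congr rfl fun k _ => hsym k j
  rw [h3]
  ring

section Steps
variable {n : ℕ} (ap am : Fin n → ℝ) (aps ams apo amo : Fin n → Fin n → ℝ)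

lemma stepA
    (hsymp : ∀ j k, aps j k = aps k j)
    (hamo : ∀ j k, j ≠ k → amo j k ≤ 0)
    (h1 : ∀ (j : Fin n) (C D : Finset (Fin n)), j ∉ C → Disjoint (insert j C) D →
        0 ≤ ap j + ∑ k ∈ C, aps j k + ∑ k ∈ D, apo j k)
    (j : Fin n) (E D : Finset (Fin n)) (hj : j ∉ E) (hd : Disjoint (insert j E) D) :
    muPlus ap aps apo E D - muMinus am ams amo E D ≤
      muPlus ap aps apo (insert j E) D - muMinus am ams amo (insert j E) D := by
  have hjD : j ∉ D := fun h => Finset.disjoint_left.1 hd (Finset.mem_insert_self j E) h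
  have e1 : muPlus ap aps apo (insert j E) D =
      muPlus ap aps apo E D + (ap j + ∑ k ∈ E, aps j k + ∑ k ∈ D, apo j k) := by
    unfold muPlus
    rw [Finset.sum_insert hj, pairSum_insert aps hsymp j E hj, Finset.sum_insert hj]
    ring
  have e2 : muMinus am ams amo (insert j E) D =
      muMinus am ams amo E D + ∑ k ∈ D, amo j k := by
    unfold muMinus
    rw [Finset.sum_insert hj]
    ring
  have hpos := h1 j E D hj hd
  have hneg : ∑ k ∈ D, amo j k ≤ 0 :=
    Finset.sum_nonpos fun k hk => hamo j k (fun h => hjD (h ▸ hk))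
  rw [e1, e2]
  linarith

lemma stepB
    (hsymm : ∀ j k, ams j k = ams k j)
    (hapo : ∀ j k, j ≠ k → apo j k ≤ 0)
    (h2 : ∀ (j : Fin n) (C D : Finset (Fin n)), j ∉ D → Disjoint C (insert j D) →
        0 ≤ am j + ∑ k ∈ D, ams j k + ∑ k ∈ C, amo k j)
    (j : Fin n) (E D : Finset (Fin n)) (hj : j ∉ D) (hd : Disjoint E (insert j D)) :
    muPlus ap aps apo E (insert j D) - muMinus am ams amo E (insert j D) ≤
      muPlus ap aps apo E D - muMinus am ams amo E D := by
  have hjE : j ∉ E := fun h => Finset.disjoint_right.1 hd (Finset.mem_insert_self j D) h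
  have e1 : muPlus ap aps apo E (insert j D) =
      muPlus ap aps apo E D + ∑ k ∈ E, apo k j := by
    unfold muPlus
    rw [Finset.sum_congr rfl (fun i (_ : i ∈ E) => Finset.sum_insert hj), Finset.sum_add_distrib]
    ring
  have e2 : muMinus am ams amo E (insert j D) =
      muMinus am ams amo E D + (am j + ∑ k ∈ D, ams j k + ∑ k ∈ E, amo k j) := by
    unfold muMinus
    rw [Finset.sum_insert hj, pairSum_insert ams hsymm j D hj,
      Finset.sum_congr rfl (fun i (_ : i ∈ E) => Finset.sum_insert hj), Finset.sum_add_distrib]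
    ring
  have hpos := h2 j E D hj hd
  have hneg : ∑ k ∈ E, apo k j ≤ 0 :=
    Finset.sum_nonpos fun k hk => hapo k j (fun h => hjE (h ▸ hk))
  rw [e1, e2]
  linarith

end Steps

theorem stmt_17 {n : ℕ} (hn : 1 ≤ n)
    (ap am : Fin n → ℝ) (aps ams apo amo : Fin n → Fin n → ℝ)
    (hap : ∀ j, 0 ≤ ap j) (ham : ∀ j, 0 ≤ am j)
    (hsymp : ∀ j k, aps j k = aps k j) (hsymm : ∀ j k, ams j k = ams k j)
    (hapo : ∀ j k, j ≠ k → apo j k ≤ 0) (hamo : ∀ j k, j ≠ k → amo j k ≤ 0)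
    (h1 : ∀ (j : Fin n) (C D : Finset (Fin n)), j ∉ C → Disjoint (insert j C) D →
        0 ≤ ap j + ∑ k ∈ C, aps j k + ∑ k ∈ D, apo j k)
    (h2 : ∀ (j : Fin n) (C D : Finset (Fin n)), j ∉ D → Disjoint C (insert j D) →
        0 ≤ am j + ∑ k ∈ D, ams j k + ∑ k ∈ C, amo k j) :
    ∀ C D E F : Finset (Fin n), Disjoint C D → Disjoint E F →
      E ⊆ C → D ⊆ F →
        muPlus ap aps apo E F - muMinus am ams amo E F ≤
          muPlus ap aps apo C D - muMinus am ams amo C D := by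
  have lemA : ∀ (s E D : Finset (Fin n)), Disjoint (E ∪ s) D →
      muPlus ap aps apo E D - muMinus am ams amo E D ≤
        muPlus ap aps apo (E ∪ s) D - muMinus am ams amo (E ∪ s) D := by
    intro s
    induction s using Finset.induction_on with
    | empty => intro E D _; rw [Finset.union_empty]
    | @insert a s ha ih =>
      intro E D hd
      have hEs : E ∪ insert a s = insert a (E ∪ s) := by
        rw [Finset.union_insert]
      rw [hEs] at hd ⊢
      by_cases hmem : a ∈ E ∪ s
      · rw [Finset.insert_eq_self.2 hmem] at hd ⊢
        exact ih E D hd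
      · calc _ ≤ muPlus ap aps apo (E ∪ s) D - muMinus am ams amo (E ∪ s) D :=
              ih E D (hd.mono_left (Finset.subset_insert a _))
          _ ≤ _ := stepA ap am aps ams apo amo hsymp hamo h1 a (E ∪ s) D hmem hd
  have lemB : ∀ (s E D : Finset (Fin n)), Disjoint E (D ∪ s) →
      muPlus ap aps apo E (D ∪ s) - muMinus am ams amo E (D ∪ s) ≤
        muPlus ap aps apo E D - muMinus am ams amo E D := by
    intro s
    induction s using Finset.induction_on with
    | empty => intro E D _; rw [Finset.union_empty]
    | @insert a s ha ih =>
      intro E D hd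
      have hDs : D ∪ insert a s = insert a (D ∪ s) := by
        rw [Finset.union_insert]
      rw [hDs] at hd ⊢
      by_cases hmem : a ∈ D ∪ s
      · rw [Finset.insert_eq_self.2 hmem] at hd ⊢
        exact ih E D hd
      · calc _ ≤ muPlus ap aps apo E (D ∪ s) - muMinus am ams amo E (D ∪ s) :=
              stepB ap am aps ams apo amo hsymm hapo h2 a E (D ∪ s) hmem hd
          _ ≤ _ := ih E D (hd.mono_right (Finset.subset_insert a _))
  intro C D E F hCD hEF hEC hDF
  have hF : D ∪ (F \ D) = F := Finset.union_sdiff_of_subset hDF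
  have hC : E ∪ (C \ E) = C := Finset.union_sdiff_of_subset hEC
  calc muPlus ap aps apo E F - muMinus am ams amo E F
      ≤ muPlus ap aps apo E D - muMinus am ams amo E D := by
        have := lemB (F \ D) E D (by rw [hF]; exact hEF)
        rwa [hF] at this
    _ ≤ muPlus ap aps apo C D - muMinus am ams amo C D := by
        have := lemA (C \ E) E D (by rw [hC]; exact hCD)
        rwa [hC] at this
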